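/- Let Z^d ⊆ H ⊆ Q^d. The translation action of Z^d on the Pontryagin dual Y_H of H/Z^d (where n ∈ Z^d acts by multiplying a character x by the character h + Z^d ↦ exp(2πi⟨h,n⟩)) is free if and only if H is dense in Q^d (equivalently dense in R^d). -/

import Mathlib

/-- The integer lattice `ℤᵈ` inside `ℚᵈ`. -/
def zLattice (d : ℕ) : AddSubgroup (Fin d → ℚ) :=
  AddSubgroup.pi Set.univ (fun _ => (Int.castAddHom ℚ).range)

/-- The pairing `v ↦ ⟨v, n⟩` from `ℚᵈ` to `ℝ`, for `n ∈ ℤᵈ`. -/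
noncomputable def pairHom (d : ℕ) (n : Fin d → ℤ) : (Fin d → ℚ) →+ ℝ where
  toFun v := ∑ i, (v i : ℝ) * n i
  map_zero' := by simp
  map_add' a b := by
    show (∑ i, (((a + b) i : ℚ) : ℝ) * n i) = _
    rw [← Finset.sum_add_distrib]
    congr 1; funext i
    push_cast [Pi.add_apply]
    ring

/-- The dual `ρ̂ : ℤᵈ → Y_H` of the inclusion `H/ℤᵈ → ℝᵈ/ℤᵈ`: the element
`n ∈ ℤᵈ` is sent to the character `h + ℤᵈ ↦ ⟨h,n⟩ mod 1` of `H/ℤᵈ`. -/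
noncomputable def rhoHat (d : ℕ) (H : AddSubgroup (Fin d → ℚ)) (n : Fin d → ℤ) :
    (H ⧸ (zLattice d).addSubgroupOf H) →+ AddCircle (1 : ℝ) :=
  QuotientAddGroup.lift ((zLattice d).addSubgroupOf H)
    (((QuotientAddGroup.mk' (AddSubgroup.zmultiples (1 : ℝ))).comp (pairHom d n)).comp
      H.subtype)
    (by
      rintro ⟨v, hvH⟩ hv
      have hv' : v ∈ zLattice d := hv
      choose w hw using fun i => hv' i (Set.mem_univ i)
      simp only [AddMonoidHom.mem_ker, AddMonoidHom.comp_apply,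
        QuotientAddGroup.mk'_apply, QuotientAddGroup.eq_zero_iff]
      refine ⟨∑ i, w i * n i, ?_⟩
      push_cast
      simp only [zsmul_eq_mul, mul_one, pairHom, AddMonoidHom.coe_mk, ZeroHom.coe_mk]
      rw [Int.cast_sum]
      refine Finset.sum_congr rfl fun i _ => ?_
      have : (v i : ℝ) = ((w i : ℤ) : ℝ) := by
        rw [← hw i]; simp [Int.castAddHom]
      simp only [AddSubgroup.coe_subtype, this]
      push_cast
      ring)

noncomputable section
open MeasureTheory Complex Metric

abbrev Torus (d : ℕ) := Fin d → AddCircle (1 : ℝ)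
instance : Fact ((0:ℝ) < 1) := ⟨one_pos⟩

def chi (d : ℕ) (n : Fin d → ℤ) : C(Torus d, ℂ) :=
  ⟨fun y => ∏ i, (AddCircle.toCircle (n i • y i) : ℂ), by
    apply continuous_finset_prod
    intro i _
    exact continuous_subtype_val.comp
      (AddCircle.continuous_toCircle.comp ((continuous_apply i).zsmul (n i)))⟩
lemma chi_apply (d : ℕ) (n : Fin d → ℤ) (y : Torus d) :
    chi d n y = ∏ i, (AddCircle.toCircle (n i • y i) : ℂ) := rfl
lemma chi_zero (d : ℕ) : chi d 0 = 1 := by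
  ext y; simp [chi_apply]
lemma chi_add (d : ℕ) (m n : Fin d → ℤ) : chi d (m + n) = chi d m * chi d n := by
  ext y
  simp only [chi_apply, ContinuousMap.mul_apply, ← Finset.prod_mul_distrib]
  congr 1; funext i
  rw [Pi.add_apply, add_zsmul, AddCircle.toCircle_add]
  push_cast; ring
lemma chi_neg (d : ℕ) (n : Fin d → ℤ) : chi d (-n) = star (chi d n) := by
  ext y
  simp only [chi_apply, ContinuousMap.star_apply, RCLike.star_def, map_prod]
  congr 1; funext i
  have h1 : AddCircle.toCircle (-n i • y i) * AddCircle.toCircle (n i • y i) = 1 := by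
    rw [← AddCircle.toCircle_add, neg_zsmul, neg_add_cancel, AddCircle.toCircle_zero]
  have : AddCircle.toCircle (-n i • y i) = (AddCircle.toCircle (n i • y i))⁻¹ :=
    eq_inv_of_mul_eq_one_left h1
  rw [Pi.neg_apply, this, Circle.coe_inv_eq_conj]
lemma chi_translate (d : ℕ) (n : Fin d → ℤ) (c y : Torus d) :
    chi d n (c + y) = chi d n c * chi d n y := by
  simp only [chi_apply, ← Finset.prod_mul_distrib]
  congr 1; funext i
  rw [Pi.add_apply, smul_add, AddCircle.toCircle_add]
  push_cast; ring
def charSpan (d : ℕ) : Submodule ℂ C(Torus d, ℂ) := Submodule.span ℂ (Set.range (chi d))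
lemma charSpan_mul_mem (d : ℕ) {a b : C(Torus d, ℂ)} (ha : a ∈ charSpan d)
    (hb : b ∈ charSpan d) : a * b ∈ charSpan d := by
  have h : charSpan d * charSpan d ≤ charSpan d := by
    rw [charSpan, Submodule.span_mul_span]
    apply Submodule.span_mono
    rintro x ⟨u, ⟨m, rfl⟩, v, ⟨n, rfl⟩, rfl⟩
    exact ⟨m + n, by rw [chi_add]⟩
  exact h (Submodule.mul_mem_mul ha hb)
def charAlg (d : ℕ) : StarSubalgebra ℂ C(Torus d, ℂ) :=
  { (charSpan d).toSubalgebra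
      (by exact (chi_zero d) ▸ Submodule.subset_span ⟨0, rfl⟩)
      (fun _ _ ha hb => charSpan_mul_mem d ha hb) with
    star_mem' := by
      intro a ha
      induction ha using Submodule.span_induction with
      | mem x hx => obtain ⟨n, rfl⟩ := hx; exact Submodule.subset_span ⟨-n, chi_neg d n⟩
      | zero => simp only [star_zero]; exact (charSpan d).zero_mem
      | add x y _ _ hx hy => rw [star_add]; exact (charSpan d).add_mem hx hy
      | smul c x _ hx => rw [star_smul]; exact (charSpan d).smul_mem _ hx }
lemma charAlg_carrier (d : ℕ) : (charAlg d : Set C(Torus d, ℂ)) = (charSpan d : Set _) := rfl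
lemma charAlg_separates (d : ℕ) : (charAlg d).SeparatesPoints := by
  intro x y hxy
  have : ∃ i, x i ≠ y i := by
    by_contra h; push_neg at h; exact hxy (funext h)
  obtain ⟨i, hi⟩ := this
  refine ⟨chi d (Pi.single i 1), ⟨chi d (Pi.single i 1), Submodule.subset_span ⟨_, rfl⟩, rfl⟩, ?_⟩
  simp only [chi_apply]
  intro h
  apply hi
  have h' : ∀ z : Torus d, (∏ j, (AddCircle.toCircle ((Pi.single i 1 : Fin _ → ℤ) j • z j) : ℂ))
      = AddCircle.toCircle (z i) := by
    intro z
    rw [Finset.prod_eq_single i]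
    · simp
    · intro j _ hj; simp [Pi.single_eq_of_ne hj]
    · simp
  rw [h', h'] at h
  exact AddCircle.injective_toCircle one_ne_zero (Subtype.coe_injective h)
lemma integral_zero_of_translate {X : Type*} [MeasurableSpace X] [AddGroup X] [MeasurableAdd X]
    (μ : Measure X) [μ.IsAddLeftInvariant] (F : X → ℂ) (c : X) (ζ : ℂ) (hζ : ζ ≠ 1)
    (hF : ∀ x, F (c + x) = ζ * F x) : ∫ x, F x ∂μ = 0 := by
  have h1 : ∫ x, F (c + x) ∂μ = ∫ x, F x ∂μ := integral_add_left_eq_self F c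
  have h2 : ∫ x, F (c + x) ∂μ = ζ * ∫ x, F x ∂μ := by
    simp_rw [hF]; exact integral_const_mul ζ F
  have : (ζ - 1) * ∫ x, F x ∂μ = 0 := by rw [sub_mul, h2.symm.trans h1]; ring
  rcases mul_eq_zero.mp this with h | h
  · exact absurd (sub_eq_zero.mp h) hζ
  · exact h
lemma coe_real_zsmul (z : ℤ) (x : ℝ) :
    z • ((x : ℝ) : AddCircle (1:ℝ)) = (((z : ℝ) * x : ℝ) : AddCircle (1:ℝ)) := by
  rw [← zsmul_eq_mul]
  exact (map_zsmul (QuotientAddGroup.mk' (AddSubgroup.zmultiples (1:ℝ))) z x).symm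
lemma chi_ne_one_value (d : ℕ) (n : Fin d → ℤ) (i : Fin d) (hi : n i ≠ 0) :
    chi d n (fun j => if j = i then ((((2 * n i : ℤ) : ℝ)⁻¹ : ℝ) : AddCircle (1:ℝ)) else 0)
      = -1 := by
  rw [chi_apply, Finset.prod_eq_single i]
  · simp only [if_pos]
    rw [coe_real_zsmul]
    have : (n i : ℝ) * ((2 * n i : ℤ) : ℝ)⁻¹ = 2⁻¹ := by
      push_cast
      rw [mul_inv]
      rw [mul_comm, mul_assoc, inv_mul_cancel₀ (by exact_mod_cast hi)]
      ring
    rw [this, AddCircle.toCircle_apply_mk]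
    rw [Circle.coe_exp]
    have : (2 * Real.pi / 1 * 2⁻¹ : ℝ) = Real.pi := by ring
    rw [this]
    exact_mod_cast Complex.exp_pi_mul_I
  · intro j _ hj
    simp [if_neg hj]
  · simp
def lam (d : ℕ) : Measure (Torus d) := Measure.pi fun _ => volume
instance (d : ℕ) : IsProbabilityMeasure (lam d) := by
  unfold lam
  have : IsProbabilityMeasure (volume : Measure (AddCircle (1:ℝ))) :=
    ⟨by rw [AddCircle.measure_univ]; simp⟩
  infer_instance
instance (d : ℕ) : (lam d).IsAddLeftInvariant := by unfold lam; infer_instance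
lemma cm_integrable {X E : Type*} [TopologicalSpace X] [CompactSpace X] [MeasurableSpace X]
    [OpensMeasurableSpace X] [T2Space X] [NormedAddCommGroup E] (μ : Measure X)
    [IsFiniteMeasureOnCompacts μ] (g : C(X, E)) : Integrable g μ :=
  g.continuous.integrable_of_hasCompactSupport (HasCompactSupport.of_compactSpace _)
lemma integral_chi_lam (d : ℕ) (n : Fin d → ℤ) (hn : n ≠ 0) :
    ∫ y, chi d n y ∂(lam d) = 0 := by
  have : ∃ i, n i ≠ 0 := by
    by_contra h; push_neg at h; exact hn (funext h)
  obtain ⟨i, hi⟩ := this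
  exact integral_zero_of_translate (lam d) _ _ (-1) (by norm_num)
    (fun y => by rw [chi_translate, chi_ne_one_value d n i hi])
lemma dense_of_char (d : ℕ) (S : AddSubgroup (Torus d))
    (hS : ∀ n : Fin d → ℤ, n ≠ 0 → ∃ s ∈ S, chi d n s ≠ 1) :
    Dense (S : Set (Torus d)) := by
  by_contra hdense
  set G : AddSubgroup (Torus d) := S.topologicalClosure with hG
  have hGcoe : (G : Set (Torus d)) = closure (S : Set (Torus d)) :=
    AddSubgroup.topologicalClosure_coe
  have hGclosed : IsClosed (G : Set (Torus d)) := by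
    rw [hGcoe]; exact isClosed_closure
  obtain ⟨x₀, hx₀⟩ : ∃ x₀, x₀ ∉ (G : Set (Torus d)) := by
    by_contra h; push_neg at h
    exact hdense (by rw [Dense, ← hGcoe] at *; intro x; exact h x)
  obtain ⟨r, hr, hball⟩ : ∃ r > 0, ball x₀ r ⊆ (G : Set (Torus d))ᶜ :=
    (Metric.isOpen_iff.mp hGclosed.isOpen_compl) x₀ hx₀
  -- instances on G
  haveI : CompactSpace G := isCompact_iff_compactSpace.mp (hGclosed.isCompact)
  haveI : Nonempty G := ⟨0⟩
  haveI : BorelSpace G := Subtype.borelSpace (G : Set (Torus d))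
  set μG : Measure G := Measure.addHaarMeasure ⊤ with hμG
  haveI : IsProbabilityMeasure μG := by
    constructor
    rw [← TopologicalSpace.PositiveCompacts.coe_top (α := G)]
    exact Measure.addHaarMeasure_self
  -- bump function
  set f : C(Torus d, ℝ) := ⟨fun y => max (1 - dist y x₀ / r) 0,
    (continuous_const.sub ((continuous_id.dist continuous_const).div_const r)).max
      continuous_const⟩ with hf
  set fC : C(Torus d, ℂ) := ⟨fun y => ((f y : ℝ) : ℂ),
    Complex.continuous_ofReal.comp f.continuous⟩ with hfC
  have hfG : ∀ y ∈ (G : Set (Torus d)), f y = 0 := by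
    intro y hy
    have hd : r ≤ dist y x₀ := by
      by_contra h; push_neg at h
      exact hball (mem_ball.mpr h) hy
    have : 1 - dist y x₀ / r ≤ 0 := by
      rw [sub_nonpos]
      exact (one_le_div hr).mpr hd
    exact max_eq_right this
  have hfnn : ∀ y, 0 ≤ f y := fun y => le_max_right _ _
  have hfint : Integrable f (lam d) := cm_integrable _ f
  -- positivity of the integral
  have hc₀ : 0 < ∫ y, f y ∂(lam d) := by
    have hB : 0 < lam d (ball x₀ (r / 2)) := by
      rw [show lam d = Measure.pi (fun _ => volume) from rfl, ball_pi x₀ (by linarith : (0:ℝ) < r / 2), Measure.pi_pi]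
      rw [CanonicallyOrderedAdd.prod_pos]
      intro i _
      exact Metric.isOpen_ball.measure_pos volume (Metric.nonempty_ball.mpr (by linarith))
    have hBr : 0 < (lam d (ball x₀ (r / 2))).toReal :=
      ENNReal.toReal_pos hB.ne' (measure_ne_top _ _)
    have h1 : (1/2 : ℝ) * (lam d (ball x₀ (r / 2))).toReal ≤ ∫ y in ball x₀ (r/2), f y ∂(lam d) := by
      apply setIntegral_ge_of_const_le_real measurableSet_ball (measure_ne_top _ _)
      · intro y hy
        have : dist y x₀ / r ≤ 1/2 := by
          rw [div_le_iff₀ hr]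
          have := mem_ball.mp hy
          linarith
        simp only [hf, ContinuousMap.coe_mk]
        have : (1:ℝ)/2 ≤ 1 - dist y x₀ / r := by linarith
        exact this.trans (le_max_left _ _)
      · exact hfint.integrableOn
    have h2 : ∫ y in ball x₀ (r/2), f y ∂(lam d) ≤ ∫ y, f y ∂(lam d) :=
      setIntegral_le_integral hfint (Filter.Eventually.of_forall hfnn)
    nlinarith
  set c₀ : ℝ := ∫ y, f y ∂(lam d) with hc₀def
  -- Stone-Weierstrass approximation
  have hSW : (charAlg d).topologicalClosure = ⊤ :=
    ContinuousMap.starSubalgebra_topologicalClosure_eq_top_of_separatesPoints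
      (charAlg d) (charAlg_separates d)
  have hfCmem : fC ∈ closure ((charAlg d) : Set C(Torus d, ℂ)) := by
    have : fC ∈ (charAlg d).topologicalClosure := by rw [hSW]; trivial
    exact this
  obtain ⟨P, hPmem, hPdist⟩ : ∃ P ∈ ((charAlg d) : Set C(Torus d, ℂ)), dist fC P < c₀ / 3 := by
    rw [Metric.mem_closure_iff] at hfCmem
    obtain ⟨P, hP1, hP2⟩ := hfCmem (c₀/3) (by linarith)
    exact ⟨P, hP1, hP2⟩
  have hPspan : P ∈ charSpan d := by rw [← SetLike.mem_coe, ← charAlg_carrier]; exact hPmem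
  -- integrals over G
  have key : ∀ Q : C(Torus d, ℂ), Q ∈ charSpan d →
      ∫ x : G, Q x ∂μG = ∫ y, Q y ∂(lam d) := by
    intro Q hQ
    induction hQ using Submodule.span_induction with
    | mem Q hQ =>
      obtain ⟨n, rfl⟩ := hQ
      by_cases hn : n = 0
      · subst hn
        rw [chi_zero]
        simp [ContinuousMap.one_apply]
      · rw [integral_chi_lam d n hn]
        obtain ⟨s, hsS, hs1⟩ := hS n hn
        exact integral_zero_of_translate μG _ (⟨s, S.le_topologicalClosure hsS⟩ : G)
          (chi d n s) hs1 (fun x => by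
            rw [show ((⟨s, S.le_topologicalClosure hsS⟩ + x : G) : Torus d) = s + (x : Torus d)
              from rfl, chi_translate])
    | zero => simp
    | add x y hx hy ihx ihy =>
      have h1 : Integrable (fun a : G => x (a : Torus d)) μG :=
        cm_integrable μG (x.comp ⟨_, continuous_subtype_val⟩)
      have h2 : Integrable (fun a : G => y (a : Torus d)) μG :=
        cm_integrable μG (y.comp ⟨_, continuous_subtype_val⟩)
      simp only [ContinuousMap.add_apply]
      rw [integral_add h1 h2, integral_add (cm_integrable _ x) (cm_integrable _ y), ihx, ihy]
    | smul c x hx ihx =>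
      simp only [ContinuousMap.smul_apply]
      rw [integral_smul, integral_smul, ihx]
  -- conclusion
  have hIGfC : ∫ x : G, fC x ∂μG = 0 := by
    have : (fun x : G => fC (x : Torus d)) = fun _ => 0 := by
      funext x
      simp only [hfC, ContinuousMap.coe_mk]
      rw [hfG _ x.2]; simp
    rw [this, integral_zero]
  have hIlamfC : ∫ y, fC y ∂(lam d) = (c₀ : ℂ) := by
    simp only [hfC, ContinuousMap.coe_mk]
    exact integral_ofReal
  have hbound1 : ‖∫ y, fC y ∂(lam d) - ∫ y, P y ∂(lam d)‖ ≤ c₀ / 3 := by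
    rw [← integral_sub (cm_integrable _ fC) (cm_integrable _ P)]
    have := norm_integral_le_of_norm_le_const (μ := lam d)
      (f := fun y => fC y - P y) (C := dist fC P)
      (Filter.Eventually.of_forall (fun y => by
        rw [← dist_eq_norm]; exact ContinuousMap.dist_apply_le_dist y))
    rw [probReal_univ, mul_one] at this
    linarith
  have hbound2 : ‖∫ x : G, fC x ∂μG - ∫ x : G, P x ∂μG‖ ≤ c₀ / 3 := by
    have h1 : Integrable (fun a : G => fC (a : Torus d)) μG :=
      cm_integrable μG (fC.comp ⟨_, continuous_subtype_val⟩)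
    have h2 : Integrable (fun a : G => P (a : Torus d)) μG :=
      cm_integrable μG (P.comp ⟨_, continuous_subtype_val⟩)
    rw [← integral_sub h1 h2]
    have := norm_integral_le_of_norm_le_const (μ := μG)
      (f := fun x : G => fC x - P x) (C := dist fC P)
      (Filter.Eventually.of_forall (fun x => by
        rw [← dist_eq_norm]; exact ContinuousMap.dist_apply_le_dist _))
    rw [probReal_univ, mul_one] at this
    linarith
  have : ‖(c₀ : ℂ)‖ ≤ c₀ / 3 + c₀ / 3 := by
    calc ‖(c₀ : ℂ)‖ = ‖(∫ y, fC y ∂(lam d) - ∫ y, P y ∂(lam d))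
          + (∫ y, P y ∂(lam d) - ∫ x : G, fC x ∂μG)‖ := by
          rw [← hIlamfC, ← key P hPspan, hIGfC]; ring_nf
    _ ≤ ‖∫ y, fC y ∂(lam d) - ∫ y, P y ∂(lam d)‖
          + ‖∫ y, P y ∂(lam d) - ∫ x : G, fC x ∂μG‖ := norm_add_le _ _
    _ ≤ c₀ / 3 + c₀ / 3 := by
          apply add_le_add hbound1
          rw [← key P hPspan, norm_sub_rev]
          exact hbound2
  rw [Complex.norm_real, Real.norm_eq_abs, abs_of_pos hc₀] at this
  linarith
lemma rhoHat_mk (d : ℕ) (H : AddSubgroup (Fin d → ℚ)) (n : Fin d → ℤ) (z : H) :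
    rhoHat d H n (QuotientAddGroup.mk z) = ((pairHom d n z.1 : ℝ) : AddCircle (1:ℝ)) := rfl

def qmap (d : ℕ) : (Fin d → ℚ) →+ Torus d where
  toFun v := fun i => ((v i : ℝ) : AddCircle (1:ℝ))
  map_zero' := by funext i; simp
  map_add' a b := by
    funext i
    show (((a i + b i : ℚ) : ℝ) : AddCircle (1:ℝ)) = _
    push_cast
    rw [QuotientAddGroup.mk_add]
    rfl
lemma qmap_apply (d : ℕ) (v : Fin d → ℚ) (i : Fin d) :
    qmap d v i = ((v i : ℝ) : AddCircle (1:ℝ)) := rfl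
lemma prod_toCircle {ι : Type*} (s : Finset ι) (g : ι → AddCircle (1:ℝ)) :
    ∏ i ∈ s, (AddCircle.toCircle (g i) : ℂ) = (AddCircle.toCircle (∑ i ∈ s, g i) : ℂ) := by
  induction s using Finset.cons_induction with
  | empty => simp
  | cons a s ha ih => rw [Finset.prod_cons, Finset.sum_cons, AddCircle.toCircle_add, ih]; push_cast; ring
lemma chi_qmap (d : ℕ) (n : Fin d → ℤ) (h : Fin d → ℚ) :
    chi d n (qmap d h) = (AddCircle.toCircle ((pairHom d n h : ℝ) : AddCircle (1:ℝ)) : ℂ) := by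
  rw [chi_apply, prod_toCircle]
  congr 1
  have : ∀ i, n i • (qmap d h i) = (((h i : ℝ) * n i : ℝ) : AddCircle (1:ℝ)) := by
    intro i
    rw [qmap_apply, coe_real_zsmul]
    norm_num [mul_comm]
  simp_rw [this]
  congr 1
  exact (map_sum (QuotientAddGroup.mk' (AddSubgroup.zmultiples (1:ℝ)))
    (fun i => (h i : ℝ) * n i) Finset.univ).symm
/-- The translation action `ψ_H` of `ℤᵈ` on the Pontryagin dual `Y_H` of `H/ℤᵈ`
(where `n` acts by `x ↦ x + ρ̂(n)`) is free if and only if `H` is dense in `ℚᵈ`. -/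
theorem odometer_free_iff_dense (d : ℕ) (H : AddSubgroup (Fin d → ℚ))
    (hZ : zLattice d ≤ H) :
    (∀ n : Fin d → ℤ,
        (∃ x : (H ⧸ (zLattice d).addSubgroupOf H) →+ AddCircle (1 : ℝ),
          x + rhoHat d H n = x) → n = 0) ↔
      Dense (H : Set (Fin d → ℚ)) := by
  constructor
  · -- free → dense
    intro F
    have hrho : ∀ n : Fin d → ℤ, n ≠ 0 → rhoHat d H n ≠ 0 := by
      intro n hn hzero
      exact hn (F n ⟨0, by rw [hzero, add_zero]⟩)
    set S : AddSubgroup (Torus d) := AddSubgroup.map (qmap d) H with hSdef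
    have hdS : Dense (S : Set (Torus d)) := by
      apply dense_of_char
      intro n hn
      have h1 := hrho n hn
      obtain ⟨y, hy⟩ : ∃ y, rhoHat d H n y ≠ 0 := by
        by_contra hc; push_neg at hc
        exact h1 (AddMonoidHom.ext hc)
      obtain ⟨z, rfl⟩ := QuotientAddGroup.mk_surjective y
      rw [rhoHat_mk] at hy
      refine ⟨qmap d z.1, ⟨z.1, z.2, rfl⟩, ?_⟩
      rw [chi_qmap]
      intro hc
      apply hy
      have h0 : ((AddCircle.toCircle (0 : AddCircle (1:ℝ))) : ℂ) = 1 := by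
        rw [AddCircle.toCircle_zero]; rfl
      have := AddCircle.injective_toCircle (T := (1:ℝ)) one_ne_zero
        (Subtype.coe_injective (hc.trans h0.symm))
      rw [this]
    -- lift density back to ℚ^d
    intro q
    rw [Metric.mem_closure_iff]
    intro ε hε
    have hx₀ := hdS (qmap d q)
    obtain ⟨b, hbS, hb⟩ := Metric.mem_closure_iff.mp hx₀ ε hε
    obtain ⟨h, hhH, rfl⟩ := hbS
    set k : Fin d → ℤ := fun i => -round ((q i : ℝ) - (h i : ℝ)) with hk
    have hkL : (fun i => (k i : ℚ)) ∈ zLattice d := fun i _ => ⟨k i, rfl⟩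
    refine ⟨h - fun i => (k i : ℚ), H.sub_mem hhH (hZ hkL), ?_⟩
    rw [dist_pi_lt_iff hε]
    intro i
    have hcoord : dist (qmap d q i) (qmap d h i) < ε :=
      lt_of_le_of_lt (dist_le_pi_dist _ _ i) hb
    rw [dist_eq_norm, qmap_apply, qmap_apply] at hcoord
    have heq : ((q i : ℝ) : AddCircle (1:ℝ)) - ((h i : ℝ) : AddCircle (1:ℝ))
        = (((q i : ℝ) - (h i : ℝ) : ℝ) : AddCircle (1:ℝ)) := by
      rw [QuotientAddGroup.mk_sub]
    rw [heq, AddCircle.norm_eq] at hcoord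
    have : dist (q i) ((h - fun i => (k i : ℚ)) i) = |(q i : ℝ) - (h i : ℝ) + k i| := by
      rw [Rat.dist_eq]
      congr 1
      push_cast [Pi.sub_apply]
      ring
    rw [inv_one, one_mul, mul_one] at hcoord
    rw [this]
    have hkk : (q i : ℝ) - (h i : ℝ) + (k i : ℝ)
        = (q i : ℝ) - (h i : ℝ) - round ((q i : ℝ) - (h i : ℝ)) := by
      rw [hk]; push_cast; ring
    rw [hkk]; exact hcoord
  · -- dense → free
    intro hdense n hx
    obtain ⟨x, hxeq⟩ := hx
    have hrho : rhoHat d H n = 0 := by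
      have := add_eq_left.mp hxeq
      exact this
    by_contra hn
    obtain ⟨i₀, hi₀⟩ : ∃ i, n i ≠ 0 := by
      by_contra hc; push_neg at hc; exact hn (funext hc)
    set q : Fin d → ℚ := fun j => if j = i₀ then ((2 * n i₀ : ℤ) : ℚ)⁻¹ else 0 with hq
    set B : ℝ := ∑ i, |(n i : ℝ)| with hB
    have hBnn : 0 ≤ B := Finset.sum_nonneg fun i _ => abs_nonneg _
    set δ : ℝ := (2 * (B + 1))⁻¹ with hδ
    have hδpos : 0 < δ := by positivity
    obtain ⟨h, hhH, hdist⟩ := Metric.mem_closure_iff.mp (hdense q) δ hδpos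
    -- the pairing of h with n is an integer
    have hmk : ((pairHom d n h : ℝ) : AddCircle (1:ℝ)) = 0 := by
      have := congrArg (fun φ => φ (QuotientAddGroup.mk (⟨h, hhH⟩ : H))) hrho
      simpa [rhoHat_mk] using this
    obtain ⟨m, hm⟩ : ∃ m : ℤ, (m : ℝ) = pairHom d n h := by
      have := (QuotientAddGroup.eq_zero_iff _).mp hmk
      obtain ⟨m, hm⟩ := AddSubgroup.mem_zmultiples_iff.mp this
      exact ⟨m, by rw [← hm]; simp⟩
    -- the pairing of q with n is 1/2
    have hqpair : (pairHom d n q : ℝ) = 1/2 := by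
      show (∑ i, (q i : ℝ) * n i) = 1/2
      rw [Finset.sum_eq_single i₀]
      · rw [hq]; simp only [if_pos]
        push_cast
        rw [mul_inv]
        field_simp
      · intro j _ hj
        rw [hq]; simp [if_neg hj]
      · simp
    -- bound the difference
    have hbound : |(pairHom d n h : ℝ) - pairHom d n q| < 1/2 := by
      have expand : (pairHom d n h : ℝ) - pairHom d n q
          = ∑ i, ((h i : ℝ) - (q i : ℝ)) * n i := by
        show (∑ i, (h i : ℝ) * n i) - (∑ i, (q i : ℝ) * n i) = _
        rw [← Finset.sum_sub_distrib]
        congr 1; funext i; ring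
      rw [expand]
      calc |∑ i, ((h i : ℝ) - (q i : ℝ)) * n i|
          ≤ ∑ i, |((h i : ℝ) - (q i : ℝ)) * n i| := Finset.abs_sum_le_sum_abs _ _
        _ ≤ ∑ i, δ * |(n i : ℝ)| := by
            apply Finset.sum_le_sum
            intro i _
            rw [abs_mul]
            apply mul_le_mul_of_nonneg_right _ (abs_nonneg _)
            have h1 : dist (q i) (h i) ≤ dist q h := dist_le_pi_dist _ _ i
            rw [Rat.dist_eq] at h1
            rw [abs_sub_comm]
            exact le_of_lt (lt_of_le_of_lt h1 hdist)
        _ = δ * B := by rw [hB, Finset.mul_sum]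
        _ < 1/2 := by
            rw [hδ]
            rw [inv_mul_lt_iff₀ (by positivity)]
            nlinarith
    rw [hqpair, ← hm] at hbound
    have h1 : (0:ℝ) < m := by
      cases abs_lt.mp hbound with
      | intro hl hr => linarith
    have h2 : (m:ℝ) < 1 := by
      cases abs_lt.mp hbound with
      | intro hl hr => linarith
    have : (0:ℤ) < m := by exact_mod_cast h1
    have : m < 1 := by exact_mod_cast h2
    omega

end
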